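/- Assume M ∉ {0, −2, −4, …}. For 0 ≤ i ≤ ⌊k/2⌋ define the operator ℙ̃_i^k = ∏_{l=0, l≠i}^{⌊k/2⌋} (Δ_LB + (k−2l)(M−2+k−2l)) / (2(i−l)(2k−2i−2l+M−2)) acting on 𝒫_k (all denominators are nonzero under the assumption on M). Then for all 0 ≤ i, j ≤ ⌊k/2⌋ and all H_{k−2j} ∈ ℋ_{k−2j}: ℙ̃_i^k(x^{2j} H_{k−2j}) = δ_{ij} x^{2j} H_{k−2j}. -/

import Mathlib

set_option synthInstance.maxHeartbeats 1000000
set_option maxHeartbeats 1000000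
open scoped TensorProduct
open MvPolynomial

noncomputable section

variable (m n : ℕ)

/-- The Grassmann algebra Λ_{2n} on `2n` anticommuting generators. -/
abbrev Grass (n : ℕ) := ExteriorAlgebra ℝ (Fin (2*n) → ℝ)

/-- The algebra of super-polynomials 𝒫 = ℝ[x_1,…,x_m] ⊗ Λ_{2n}. -/
abbrev SuperPoly (m n : ℕ) := MvPolynomial (Fin m) ℝ ⊗[ℝ] Grass n

/-- The fermionic generator x`_i. -/
def fgen (i : Fin (2*n)) : Grass n :=
  ExteriorAlgebra.ι ℝ (Pi.single i (1:ℝ))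

/-- The fermionic partial derivative ∂_{x`_i}, the odd derivation with
∂_{x`_i}(x`_j) = δ_{ij}: contraction with the i-th dual basis vector. -/
def fpderiv (i : Fin (2*n)) : Grass n →ₗ[ℝ] Grass n :=
  CliffordAlgebra.contractLeft (LinearMap.proj i)

/-- The fermionic Laplace operator on Λ_{2n}. -/
def lapF : Grass n →ₗ[ℝ] Grass n :=
  (4:ℝ) • ∑ j : Fin n,
    (fpderiv n ⟨2*j.1, by omega⟩) ∘ₗ (fpderiv n ⟨2*j.1+1, by omega⟩)

/-- The bosonic Laplace operator Δ_b = −∑ ∂_{x_j}² on ℝ[x_1,…,x_m]. -/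
def lapB : MvPolynomial (Fin m) ℝ →ₗ[ℝ] MvPolynomial (Fin m) ℝ :=
  - ∑ j : Fin m, (pderiv j).toLinearMap ∘ₗ (pderiv j).toLinearMap

/-- The super Laplace operator Δ = Δ_b + Δ_f on 𝒫. -/
def lap : SuperPoly m n →ₗ[ℝ] SuperPoly m n :=
  LinearMap.rTensor (Grass n) (lapB m) + LinearMap.lTensor (MvPolynomial (Fin m) ℝ) (lapF n)

/-- x̲² = −∑ x_j². -/
def rb2 : MvPolynomial (Fin m) ℝ := - ∑ j : Fin m, (X j)^2

/-- x`² = ∑_{j=1}^n x`_{2j−1} x`_{2j}. -/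
def rf2 : Grass n := ∑ j : Fin n, fgen n ⟨2*j.1, by omega⟩ * fgen n ⟨2*j.1+1, by omega⟩

/-- The generalized norm squared x² = x̲² + x`² as an element of 𝒫. -/
def r2 : SuperPoly m n := (rb2 m) ⊗ₜ 1 + 1 ⊗ₜ (rf2 n)

/-- The grade-`i` part of the Grassmann algebra. -/
def fgrade (i : ℕ) : Submodule ℝ (Grass n) :=
  (LinearMap.range (ExteriorAlgebra.ι ℝ (M := Fin (2*n) → ℝ)))^i

/-- The space 𝒫_k of super-polynomials homogeneous of total degree k. -/
def P (k : ℕ) : Submodule ℝ (SuperPoly m n) :=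
  ⨆ i : Fin (k+1), Submodule.map₂ (TensorProduct.mk ℝ _ _)
    (homogeneousSubmodule (Fin m) ℝ (k - i.1)) (fgrade n i.1)

/-- The space ℋ_k of spherical harmonics of degree k. -/
def H (k : ℕ) : Submodule ℝ (SuperPoly m n) :=
  P m n k ⊓ LinearMap.ker (lap m n)

/-- The super-dimension M = m − 2n. -/
def sdim : ℤ := (m : ℤ) - 2*n

/-- The super Euler operator 𝔼 = ∑ x_j ∂_{x_j} + ∑ x`_j ∂_{x`_j}. -/
def euler : SuperPoly m n →ₗ[ℝ] SuperPoly m n :=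
  LinearMap.rTensor (Grass n)
      (∑ j : Fin m, LinearMap.mulLeft ℝ (X j) ∘ₗ (pderiv j).toLinearMap) +
    LinearMap.lTensor (MvPolynomial (Fin m) ℝ)
      (∑ i : Fin (2*n), LinearMap.mulLeft ℝ (fgen n i) ∘ₗ fpderiv n i)

/-- 𝒫_k as the k-eigenspace of the Euler operator: {ω ∈ 𝒫 : 𝔼ω = kω}. -/
def PE (k : ℕ) : Submodule ℝ (SuperPoly m n) :=
  LinearMap.ker (euler m n - (k : ℝ) • LinearMap.id)

/-- ℋ_k = {ω ∈ 𝒫_k : Δω = 0}. -/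
def HE (k : ℕ) : Submodule ℝ (SuperPoly m n) :=
  PE m n k ⊓ LinearMap.ker (lap m n)

/-- The super Laplace–Beltrami operator Δ_LB = x²Δ − 𝔼(M − 2 + 𝔼). -/
def lapLB : SuperPoly m n →ₗ[ℝ] SuperPoly m n :=
  LinearMap.mulLeft ℝ (r2 m n) ∘ₗ lap m n -
    euler m n ∘ₗ (((sdim m n : ℝ) - 2) • LinearMap.id + euler m n)

/-- The projection operator
ℙ̃_i^k = ∏_{l=0, l≠i}^{⌊k/2⌋} (Δ_LB + (k−2l)(M−2+k−2l)) / (2(i−l)(2k−2i−2l+M−2)),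
realized as the evaluation at Δ_LB of the corresponding polynomial. -/
def lbProj (m n k i : ℕ) : SuperPoly m n →ₗ[ℝ] SuperPoly m n :=
  Polynomial.aeval (lapLB m n)
    (∏ l ∈ (Finset.range (k/2 + 1)).erase i,
      Polynomial.C (2*((i:ℝ) - l)*(2*k - 2*i - 2*l + (sdim m n : ℝ) - 2))⁻¹ *
        (Polynomial.X + Polynomial.C (((k:ℝ) - 2*l)*((sdim m n : ℝ) - 2 + k - 2*l))))

lemma fpderiv_fgen_mul (i a : Fin (2*n)) (g : Grass n) :
    fpderiv n i (fgen n a * g) = (if i = a then g else 0) - fgen n a * fpderiv n i g := by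
  rw [fpderiv, fgen, CliffordAlgebra.contractLeft_ι_mul]
  congr 1
  simp [LinearMap.proj, Pi.single_apply, ite_smul, eq_comm]

lemma fgen_swap (x y : Fin (2*n)) : fgen n x * fgen n y = -(fgen n y * fgen n x) := by
  refine eq_neg_of_add_eq_zero_left ?_
  exact ExteriorAlgebra.ι_add_mul_swap (R := ℝ) (M := Fin (2*n) → ℝ) (Pi.single x (1:ℝ)) (Pi.single y 1)

lemma comm3 (i a b : Fin (2*n)) (x : Grass n) :
    fgen n i * (fgen n a * (fgen n b * x)) = fgen n a * (fgen n b * (fgen n i * x)) := by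
  rw [← mul_assoc, fgen_swap n i a, neg_mul, mul_assoc, ← mul_assoc (fgen n i),
    fgen_swap n i b, neg_mul, mul_assoc, mul_neg, neg_neg]

lemma fgen_mul_self (x : Fin (2*n)) (w : Grass n) : fgen n x * (fgen n x * w) = 0 := by
  rw [← mul_assoc, fgen, ExteriorAlgebra.ι_sq_zero, zero_mul]

lemma fpd_self (i : Fin (2*n)) (g : Grass n) :
    fpderiv n i (fgen n i * g) = g - fgen n i * fpderiv n i g := by
  rw [fpderiv_fgen_mul, if_pos rfl]

lemma fpd_ne {i a : Fin (2*n)} (h : i ≠ a) (g : Grass n) :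
    fpderiv n i (fgen n a * g) = -(fgen n a * fpderiv n i g) := by
  rw [fpderiv_fgen_mul, if_neg h, zero_sub]

def eulerF : Grass n →ₗ[ℝ] Grass n :=
  ∑ i : Fin (2*n), LinearMap.mulLeft ℝ (fgen n i) ∘ₗ fpderiv n i

lemma swap1 (i a : Fin (2*n)) (w : Grass n) :
    fgen n i * (fgen n a * w) = -(fgen n a * (fgen n i * w)) := by
  rw [← mul_assoc, fgen_swap n i a, neg_mul, mul_assoc]

lemma eulerF_pair (a b : Fin (2*n)) (hab : a ≠ b) (g : Grass n) :
    eulerF n (fgen n a * (fgen n b * g)) =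
      fgen n a * (fgen n b * eulerF n g) + (2:ℝ) • (fgen n a * (fgen n b * g)) := by
  have key : ∀ i : Fin (2*n), fgen n i * fpderiv n i (fgen n a * (fgen n b * g)) =
      fgen n a * (fgen n b * (fgen n i * fpderiv n i g)) +
        ((if i = a then fgen n a * (fgen n b * g) else 0) +
         (if i = b then fgen n a * (fgen n b * g) else 0)) := by
    intro i
    by_cases hia : i = a
    · subst hia
      rw [fpd_self, fpd_ne n hab, if_pos rfl, if_neg hab, add_zero]
      rw [mul_sub, mul_neg, mul_neg, fgen_mul_self, neg_zero, sub_zero, comm3 n i b i,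
        fgen_mul_self, mul_zero, zero_add]
    · by_cases hib : i = b
      · subst hib
        rw [fpd_ne n hia, fpd_self, if_neg hia, if_pos rfl, zero_add, fgen_mul_self,
          mul_zero, zero_add, mul_sub, neg_sub, mul_sub, comm3 n i a i, fgen_mul_self,
          mul_zero, zero_sub, swap1, neg_neg]
      · rw [fpd_ne n hia, fpd_ne n hib, if_neg hia, if_neg hib, add_zero, add_zero]
        simp only [mul_neg, neg_neg]
        rw [comm3]
  simp only [eulerF, LinearMap.sum_apply, LinearMap.comp_apply, LinearMap.mulLeft_apply,
    Finset.mul_sum]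
  rw [Finset.sum_congr rfl fun i _ => key i]
  rw [Finset.sum_add_distrib, Finset.sum_add_distrib, Finset.sum_ite_eq' Finset.univ,
    Finset.sum_ite_eq' Finset.univ, if_pos (Finset.mem_univ a), if_pos (Finset.mem_univ b),
    two_smul]

lemma fin_ne (x y : ℕ) (hx : x < 2*n) (hy : y < 2*n) (h : x ≠ y) :
    (⟨x, hx⟩ : Fin (2*n)) ≠ ⟨y, hy⟩ := by
  simp only [ne_eq, Fin.mk.injEq]; omega

lemma eulerF_rf2 (g : Grass n) :
    eulerF n (rf2 n * g) = rf2 n * eulerF n g + (2:ℝ) • (rf2 n * g) := by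
  rw [rf2, Finset.sum_mul, Finset.sum_mul, map_sum]
  simp only [mul_assoc]
  rw [Finset.sum_congr rfl fun a _ => eulerF_pair n _ _
    (fin_ne n (2*a.1) (2*a.1+1) (by omega) (by omega) (by omega)) g]
  rw [Finset.sum_add_distrib, Finset.smul_sum]

def lapFd : Grass n →ₗ[ℝ] Grass n :=
  ∑ j : Fin n, (fpderiv n ⟨2*j.1, by omega⟩) ∘ₗ (fpderiv n ⟨2*j.1+1, by omega⟩)

lemma D_pair (j a : Fin n) (g : Grass n) :
    ((fpderiv n ⟨2*j.1, by omega⟩) ∘ₗ (fpderiv n ⟨2*j.1+1, by omega⟩))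
        (fgen n ⟨2*a.1, by omega⟩ * (fgen n ⟨2*a.1+1, by omega⟩ * g)) =
      fgen n ⟨2*a.1, by omega⟩ * (fgen n ⟨2*a.1+1, by omega⟩ *
        (((fpderiv n ⟨2*j.1, by omega⟩) ∘ₗ (fpderiv n ⟨2*j.1+1, by omega⟩)) g)) +
      (if j = a then (fgen n ⟨2*a.1, by omega⟩ * fpderiv n ⟨2*a.1, by omega⟩ g +
        fgen n ⟨2*a.1+1, by omega⟩ * fpderiv n ⟨2*a.1+1, by omega⟩ g - g) else 0) := by
  have hqA : (⟨2*j.1+1, by omega⟩ : Fin (2*n)) ≠ ⟨2*a.1, by omega⟩ :=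
    fin_ne n _ _ (by omega) (by omega) (by omega)
  have hpB : (⟨2*j.1, by omega⟩ : Fin (2*n)) ≠ ⟨2*a.1+1, by omega⟩ :=
    fin_ne n _ _ (by omega) (by omega) (by omega)
  by_cases hja : j = a
  · subst hja
    have hq : (⟨2*j.1+1, by omega⟩ : Fin (2*n)) = ⟨2*j.1+1, by omega⟩ := rfl
    rw [LinearMap.comp_apply, LinearMap.comp_apply, fpd_ne n hqA, fpd_self, if_pos rfl]
    rw [map_neg, mul_sub, map_sub, fpd_self, fpd_self, fpd_ne n hpB]
    simp only [mul_sub, mul_neg, neg_neg, sub_eq_add_neg, neg_add, neg_neg]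
    abel
  · have hqB : (⟨2*j.1+1, by omega⟩ : Fin (2*n)) ≠ ⟨2*a.1+1, by omega⟩ :=
      fin_ne n _ _ (by omega) (by omega) (fun h => hja (Fin.ext (by omega)))
    have hpA : (⟨2*j.1, by omega⟩ : Fin (2*n)) ≠ ⟨2*a.1, by omega⟩ :=
      fin_ne n _ _ (by omega) (by omega) (fun h => hja (Fin.ext (by omega)))
    rw [LinearMap.comp_apply, LinearMap.comp_apply, fpd_ne n hqA, fpd_ne n hqB,
      if_neg hja, add_zero]
    simp only [map_neg, mul_neg, neg_neg]
    rw [fpd_ne n hpA, fpd_ne n hpB]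
    simp only [mul_neg, neg_neg]

lemma sum_fin_two {β : Type*} [AddCommMonoid β] (f : Fin (2*n) → β) :
    ∑ i, f i = ∑ a : Fin n, (f ⟨2*a.1, by omega⟩ + f ⟨2*a.1+1, by omega⟩) := by
  have hb : Function.Bijective (fun p : Fin n × Fin 2 => (⟨2*p.1.1 + p.2.1, by omega⟩ : Fin (2*n))) := by
    rw [Fintype.bijective_iff_injective_and_card]
    constructor
    · rintro ⟨⟨x,hx⟩,⟨y,hy⟩⟩ ⟨⟨z,hz⟩,⟨w,hw⟩⟩ h
      simp only [Fin.mk.injEq, Prod.mk.injEq] at h ⊢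
      omega
    · simp only [Fintype.card_prod, Fintype.card_fin]; ring
  rw [← Fintype.sum_bijective _ hb (fun p => f ⟨2*p.1.1+p.2.1, by omega⟩) f (fun p => rfl)]
  rw [Fintype.sum_prod_type]
  refine Finset.sum_congr rfl fun a _ => ?_
  rw [Fin.sum_univ_two]
  congr 2

lemma lapFd_rf2 (g : Grass n) :
    lapFd n (rf2 n * g) = rf2 n * lapFd n g + eulerF n g - (n:ℝ) • g := by
  rw [rf2, Finset.sum_mul]
  simp only [mul_assoc]
  rw [map_sum]
  have step : ∀ a : Fin n, lapFd n (fgen n ⟨2*a.1, by omega⟩ * (fgen n ⟨2*a.1+1, by omega⟩ * g)) =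
      fgen n ⟨2*a.1, by omega⟩ * (fgen n ⟨2*a.1+1, by omega⟩ * lapFd n g) +
      (fgen n ⟨2*a.1, by omega⟩ * fpderiv n ⟨2*a.1, by omega⟩ g +
        fgen n ⟨2*a.1+1, by omega⟩ * fpderiv n ⟨2*a.1+1, by omega⟩ g - g) := by
    intro a
    rw [lapFd, LinearMap.sum_apply]
    rw [Finset.sum_congr rfl fun j _ => D_pair n j a g]
    rw [Finset.sum_add_distrib, Finset.sum_ite_eq' Finset.univ, if_pos (Finset.mem_univ a)]
    congr 1
    rw [LinearMap.sum_apply, Finset.mul_sum, Finset.mul_sum]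
  rw [Finset.sum_congr rfl fun a _ => step a]
  rw [Finset.sum_add_distrib, Finset.sum_sub_distrib]
  have e2 : eulerF n g = ∑ a : Fin n,
      (fgen n ⟨2*a.1, by omega⟩ * fpderiv n ⟨2*a.1, by omega⟩ g +
        fgen n ⟨2*a.1+1, by omega⟩ * fpderiv n ⟨2*a.1+1, by omega⟩ g) := by
    rw [eulerF, LinearMap.sum_apply]
    simp only [LinearMap.comp_apply, LinearMap.mulLeft_apply]
    exact sum_fin_two n (fun i => fgen n i * fpderiv n i g)
  have e3 : ∑ _a : Fin n, g = (n:ℝ) • g := by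
    rw [Finset.sum_const, Finset.card_univ, Fintype.card_fin, Nat.cast_smul_eq_nsmul]
  rw [e2, e3, add_sub_assoc, Finset.sum_mul]
  simp only [mul_assoc]

lemma lapF_rf2 (g : Grass n) :
    lapF n (rf2 n * g) = rf2 n * lapF n g + (4:ℝ) • eulerF n g - (4*(n:ℝ)) • g := by
  rw [lapF, LinearMap.smul_apply, LinearMap.smul_apply, ← lapFd, lapFd_rf2]
  rw [smul_sub, smul_add, mul_smul_comm, smul_smul]

def eulerB (m : ℕ) : MvPolynomial (Fin m) ℝ →ₗ[ℝ] MvPolynomial (Fin m) ℝ :=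
  ∑ j : Fin m, LinearMap.mulLeft ℝ (X j) ∘ₗ (pderiv j).toLinearMap

lemma pderiv_rb2 (j : Fin m) : pderiv j (rb2 m) = -(2 * X j) := by
  rw [rb2, map_neg, map_sum]
  have : ∀ i : Fin m, pderiv j ((X i : MvPolynomial (Fin m) ℝ)^2) =
      if i = j then 2 * X j else 0 := by
    intro i
    rw [pow_two, pderiv_mul, pderiv_X, Pi.single_apply]
    by_cases h : i = j
    · subst h; simp [two_mul]
    · simp [h]
  rw [Finset.sum_congr rfl fun i _ => this i, Finset.sum_ite_eq' Finset.univ,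
    if_pos (Finset.mem_univ j)]

lemma eulerB_rb2 (p : MvPolynomial (Fin m) ℝ) :
    eulerB m (rb2 m * p) = rb2 m * eulerB m p + (2:ℝ) • (rb2 m * p) := by
  simp only [eulerB, LinearMap.sum_apply, LinearMap.comp_apply, LinearMap.mulLeft_apply,
    Derivation.coeFn_coe]
  have key : ∀ j : Fin m, X j * pderiv j (rb2 m * p) =
      rb2 m * (X j * pderiv j p) - 2*((X j)^2 * p) := by
    intro j
    rw [pderiv_mul, pderiv_rb2]
    ring
  rw [Finset.sum_congr rfl fun j _ => key j, Finset.sum_sub_distrib, ← Finset.mul_sum,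
    ← Finset.mul_sum, ← Finset.sum_mul]
  rw [smul_eq_C_mul, map_ofNat, rb2]
  ring

lemma lapB_rb2 (p : MvPolynomial (Fin m) ℝ) :
    lapB m (rb2 m * p) = rb2 m * lapB m p + ((2:ℝ)*m) • p + (4:ℝ) • eulerB m p := by
  simp only [lapB, LinearMap.neg_apply, LinearMap.sum_apply, LinearMap.comp_apply,
    Derivation.coeFn_coe]
  have key : ∀ j : Fin m, pderiv j (pderiv j (rb2 m * p)) =
      rb2 m * pderiv j (pderiv j p) - 2*p - 4*(X j * pderiv j p) := by
    intro j
    have hp2 : pderiv j (2 : MvPolynomial (Fin m) ℝ) = 0 := by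
      rw [← map_ofNat (C : ℝ →+* MvPolynomial (Fin m) ℝ) 2, pderiv_C]
    rw [pderiv_mul, pderiv_rb2]
    simp only [map_add, map_neg, pderiv_mul, pderiv_rb2, pderiv_X_self, hp2]
    ring
  rw [Finset.sum_congr rfl fun j _ => key j]
  rw [Finset.sum_sub_distrib, Finset.sum_sub_distrib, ← Finset.mul_sum, ← Finset.mul_sum,
    Finset.sum_const, Finset.card_univ, Fintype.card_fin]
  simp only [eulerB, LinearMap.sum_apply, LinearMap.comp_apply, LinearMap.mulLeft_apply,
    Derivation.coeFn_coe]
  simp only [smul_eq_C_mul, map_mul, map_ofNat, MvPolynomial.C_eq_coe_nat]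
  rw [nsmul_eq_mul]
  simp only [Finset.mul_sum, Finset.sum_mul]
  ring_nf
  rw [Finset.mul_sum]

lemma euler_eq (m n : ℕ) : euler m n =
    LinearMap.rTensor (Grass n) (eulerB m) +
      LinearMap.lTensor (MvPolynomial (Fin m) ℝ) (eulerF n) := rfl

lemma euler_r2_mul (m n : ℕ) (f : SuperPoly m n) :
    euler m n (r2 m n * f) = r2 m n * euler m n f + (2:ℝ) • (r2 m n * f) := by
  induction f using TensorProduct.induction_on with
  | zero => simp
  | tmul p g =>
    simp only [euler_eq, r2, add_mul, mul_add, Algebra.TensorProduct.tmul_mul_tmul, one_mul, mul_one,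
      map_add, LinearMap.add_apply, LinearMap.rTensor_tmul, LinearMap.lTensor_tmul,
      eulerB_rb2, eulerF_rf2, TensorProduct.add_tmul, TensorProduct.tmul_add, TensorProduct.tmul_smul, ← TensorProduct.smul_tmul', smul_add]
    module
  | add u v hu hv =>
    simp only [mul_add, map_add, hu, hv, smul_add]
    abel

lemma lap_eq (m n : ℕ) : lap m n =
    LinearMap.rTensor (Grass n) (lapB m) +
      LinearMap.lTensor (MvPolynomial (Fin m) ℝ) (lapF n) := rfl

lemma lap_r2_mul (m n : ℕ) (f : SuperPoly m n) :
    lap m n (r2 m n * f) = r2 m n * lap m n f + (2*(sdim m n : ℝ)) • f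
      + (4:ℝ) • euler m n f := by
  have hsd : (2*(sdim m n : ℝ)) = 2*(m:ℝ) - 4*(n:ℝ) := by
    rw [sdim]; push_cast; ring
  induction f using TensorProduct.induction_on with
  | zero => simp
  | tmul p g =>
    simp only [lap_eq, euler_eq, r2, add_mul, mul_add, Algebra.TensorProduct.tmul_mul_tmul, one_mul,
      mul_one, map_add, LinearMap.add_apply, LinearMap.rTensor_tmul, LinearMap.lTensor_tmul,
      lapB_rb2, lapF_rf2, TensorProduct.add_tmul, TensorProduct.tmul_add, TensorProduct.tmul_sub, TensorProduct.tmul_smul, ← TensorProduct.smul_tmul', smul_add,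
      hsd, sub_smul]
    module
  | add u v hu hv =>
    simp only [mul_add, map_add, hu, hv, smul_add]
    abel

lemma euler_r2_pow (m n : ℕ) (c : ℝ) (H : SuperPoly m n) (hE : euler m n H = c • H) :
    ∀ t : ℕ, euler m n (r2 m n ^ t * H) = (c + 2*t) • (r2 m n ^ t * H) := by
  intro t
  induction t with
  | zero => simpa using hE
  | succ t ih =>
    rw [pow_succ', mul_assoc, euler_r2_mul, ih, mul_smul_comm]
    rw [← mul_assoc, ← pow_succ']
    rw [← add_smul]
    congr 1
    push_cast
    ring

lemma lap_r2_pow (m n : ℕ) (c : ℝ) (H : SuperPoly m n) (hE : euler m n H = c • H)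
    (hL : lap m n H = 0) :
    ∀ t : ℕ, lap m n (r2 m n ^ t * H) =
      (2*t*((sdim m n : ℝ) + 2*c + 2*t - 2)) • (r2 m n ^ (t-1) * H) := by
  intro t
  induction t with
  | zero => simpa using hL
  | succ t ih =>
    rw [pow_succ', mul_assoc, lap_r2_mul, ih, euler_r2_pow m n c H hE t]
    by_cases ht : t = 0
    · subst ht
      simp only [Nat.cast_zero, mul_zero, zero_mul, zero_smul, smul_zero, zero_add, Nat.sub_self, pow_zero,
        one_mul, Nat.cast_one]
      rw [smul_smul, ← add_smul]
      congr 1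
      ring
    · have h1 : t - 1 + 1 = t := Nat.succ_pred_eq_of_pos (Nat.pos_of_ne_zero ht)
      rw [mul_smul_comm, ← mul_assoc, ← pow_succ', h1]
      rw [Nat.add_sub_cancel]
      rw [smul_smul, ← add_smul, ← add_smul]
      congr 1
      push_cast
      ring

lemma lapLB_eigen (m n : ℕ) (c : ℝ) (H : SuperPoly m n) (hE : euler m n H = c • H)
    (hL : lap m n H = 0) (j : ℕ) :
    lapLB m n (r2 m n ^ j * H) =
      (2*j*((sdim m n : ℝ) + 2*c + 2*j - 2) - (c + 2*j)*((sdim m n : ℝ) - 2 + c + 2*j)) •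
        (r2 m n ^ j * H) := by
  have h1 : r2 m n * lap m n (r2 m n ^ j * H) =
      (2*j*((sdim m n : ℝ) + 2*c + 2*j - 2)) • (r2 m n ^ j * H) := by
    rw [lap_r2_pow m n c H hE hL j]
    by_cases hj : j = 0
    · subst hj; simp
    · rw [mul_smul_comm, ← mul_assoc, ← pow_succ', Nat.sub_add_cancel (Nat.one_le_iff_ne_zero.mpr hj)]
  have h2 : euler m n (((sdim m n : ℝ) - 2) • (r2 m n ^ j * H) + euler m n (r2 m n ^ j * H)) =
      ((c + 2*j)*((sdim m n : ℝ) - 2 + c + 2*j)) • (r2 m n ^ j * H) := by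
    rw [euler_r2_pow m n c H hE j, ← add_smul, map_smul, euler_r2_pow m n c H hE j, smul_smul]
    congr 1
    ring
  rw [lapLB, LinearMap.sub_apply, LinearMap.comp_apply, LinearMap.comp_apply,
    LinearMap.mulLeft_apply, LinearMap.add_apply, LinearMap.smul_apply, LinearMap.id_apply,
    h1, h2]
  exact (sub_smul _ _ _).symm

lemma pow_eigen {V : Type*} [AddCommGroup V] [Module ℝ V] (T : V →ₗ[ℝ] V) (v : V) (lam : ℝ)
    (h : T v = lam • v) : ∀ t : ℕ, (T ^ t) v = lam ^ t • v := by
  intro t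
  induction t with
  | zero => simp
  | succ t ih =>
    rw [pow_succ, Module.End.mul_apply, h, map_smul, ih, smul_smul, pow_succ, mul_comm]

lemma aeval_eigen {V : Type*} [AddCommGroup V] [Module ℝ V] (T : V →ₗ[ℝ] V) (v : V) (lam : ℝ)
    (h : T v = lam • v) (q : Polynomial ℝ) :
    (Polynomial.aeval T q) v = (q.eval lam) • v := by
  rw [Polynomial.aeval_eq_sum_range, Polynomial.eval_eq_sum_range, LinearMap.sum_apply]
  rw [Finset.sum_congr rfl fun t _ => by
    rw [LinearMap.smul_apply, pow_eigen T v lam h t, smul_smul]]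
  rw [← Finset.sum_smul]

/-- assume M ∉ {0,−2,−4,…}.  For all 0 ≤ i, j ≤ ⌊k/2⌋ and all
H_{k−2j} ∈ ℋ_{k−2j}: ℙ̃_i^k(x^{2j} H_{k−2j}) = δ_{ij} x^{2j} H_{k−2j}. -/
theorem lbProj_apply (m n : ℕ) (hm : 1 ≤ m) (hn : 1 ≤ n)
    (hM : ∀ j : ℕ, sdim m n ≠ -(2*(j:ℤ)))
    (k i j : ℕ) (hi : i ≤ k/2) (hj : j ≤ k/2)
    (Hkj : SuperPoly m n) (hH : Hkj ∈ HE m n (k - 2*j)) :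
    lbProj m n k i ((r2 m n)^j * Hkj) =
      if i = j then (r2 m n)^j * Hkj else 0 := by
  have h2j : 2*j ≤ k := by omega
  obtain ⟨hH1, hH2⟩ := Submodule.mem_inf.mp hH
  have hc : euler m n Hkj = ((k - 2*j : ℕ) : ℝ) • Hkj := by
    have h := LinearMap.mem_ker.mp hH1
    rw [LinearMap.sub_apply, LinearMap.smul_apply, LinearMap.id_apply, sub_eq_zero] at h
    exact h
  have hL : lap m n Hkj = 0 := LinearMap.mem_ker.mp hH2
  have hcast : ((k - 2*j : ℕ) : ℝ) = (k : ℝ) - 2*j := by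
    push_cast [h2j]; ring
  have heig := lapLB_eigen m n _ Hkj hc hL j
  set M : ℝ := (sdim m n : ℝ) with hMdef
  set c : ℝ := ((k - 2*j : ℕ) : ℝ) with hcdef
  set lam : ℝ := 2*j*(M + 2*c + 2*j - 2) - (c + 2*j)*(M - 2 + c + 2*j) with hlamdef
  have hlam : lam = -(((k:ℝ) - 2*j)*(M - 2 + ((k:ℝ) - 2*j))) := by
    rw [hlamdef, hcast]; ring
  rw [lbProj, aeval_eigen _ _ lam heig, Polynomial.eval_prod]
  have hMne : ∀ t : ℕ, M + 2*(t:ℝ) ≠ 0 := by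
    intro t h0
    apply hM t
    have : (sdim m n : ℝ) = ((-(2*(t:ℕ)) : ℤ) : ℝ) := by push_cast; rw [hMdef] at h0; linarith
    exact_mod_cast this
  by_cases hij : i = j
  · subst hij
    rw [if_pos rfl]
    have hone : ∀ l ∈ (Finset.range (k/2 + 1)).erase i,
        Polynomial.eval lam
          (Polynomial.C (2*((i:ℝ) - l)*(2*k - 2*i - 2*l + M - 2))⁻¹ *
            (Polynomial.X + Polynomial.C (((k:ℝ) - 2*l)*(M - 2 + k - 2*l)))) = 1 := by
      intro l hl
      obtain ⟨hli, hlr⟩ := Finset.mem_erase.mp hl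
      have hlk : l ≤ k/2 := by
        have := Finset.mem_range.mp hlr; omega
      have hsum : i + l + 1 ≤ k := by omega
      have hident : lam + ((k:ℝ) - 2*l)*(M - 2 + k - 2*l) =
          2*((i:ℝ) - l)*(2*k - 2*i - 2*l + M - 2) := by
        rw [hlam]; ring
      have hd : 2*((i:ℝ) - l)*(2*k - 2*i - 2*l + M - 2) ≠ 0 := by
        set t : ℕ := k - i - l - 1 with htdef
        have htk : (t:ℝ) = (k:ℝ) - i - l - 1 := by
          have h' : t + (i + l + 1) = k := by omega
          have h'' : (t:ℝ) + ((i:ℝ) + l + 1) = k := by exact_mod_cast h'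
          linarith
        have h2 : 2*(k:ℝ) - 2*i - 2*l + M - 2 = M + 2*(t:ℝ) := by rw [htk]; ring
        apply mul_ne_zero
        · apply mul_ne_zero two_ne_zero
          rw [sub_ne_zero]
          exact_mod_cast fun h => hli (by exact_mod_cast h.symm)
        · rw [h2]; exact hMne t
      rw [Polynomial.eval_mul, Polynomial.eval_C, Polynomial.eval_add, Polynomial.eval_X,
        Polynomial.eval_C, hident, inv_mul_cancel₀ hd]
    rw [Finset.prod_congr rfl hone, Finset.prod_const_one, one_smul]
  · rw [if_neg hij]
    have hjmem : j ∈ (Finset.range (k/2 + 1)).erase i :=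
      Finset.mem_erase.mpr ⟨fun h => hij h.symm, Finset.mem_range.mpr (by omega)⟩
    rw [Finset.prod_eq_zero hjmem ?_, zero_smul]
    rw [Polynomial.eval_mul, Polynomial.eval_C, Polynomial.eval_add, Polynomial.eval_X,
      Polynomial.eval_C, hlam]
    rw [show -(((k:ℝ) - 2*j)*(M - 2 + ((k:ℝ) - 2*j))) + ((k:ℝ) - 2*j)*(M - 2 + k - 2*j) = 0
      by ring, mul_zero]

end
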